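/- Let (X, μ) be a probability space and T : X → X an invertible measure-preserving ergodic transformation (bi-measurable bijection with μ(T(E)) = μ(E) for all measurable E). Let c > 0, let (F_k)_{k≥0} be measurable subsets of X, and let (h_k)_{k≥0} be natural numbers with h_k → ∞ such that, for every k, the images T^i(F_k) for 0 ≤ i < h_k are pairwise disjoint and the Rohlin tower 𝒯_k = ⋃_{i=0}^{h_k−1} T^i(F_k) satisfies μ(𝒯_k) > c. Then μ(⋂_{n≥0} ⋃_{k≥n} 𝒯_k) = 1, i.e. almost every point belongs to infinitely many of the towers 𝒯_k. -/

import Mathlib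

open MeasureTheory Filter Topology

/-- **Borel–Cantelli-type lemma for Rohlin towers of an ergodic transformation.**
If `T` is an invertible measure-preserving ergodic transformation of a probability
space (with measurable inverse `S`) and `𝒯_k = ⋃_{i<h_k} T^i(F_k)` are Rohlin towers
with heights `h_k → ∞` and measures uniformly bounded below by `c > 0`, then a.e.
point belongs to infinitely many towers. -/
theorem rohlin_towers_limsup_full_measure
    {X : Type*} [MeasurableSpace X] (μ : Measure X) [IsProbabilityMeasure μ]
    (T S : X → X) (hTbij : Function.Bijective T) (hTmeas : Measurable T)
    (hSmeas : Measurable S)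
    (hST : Function.LeftInverse S T) (hTS : Function.RightInverse S T)
    (hTpres : ∀ E : Set X, MeasurableSet E → μ (T '' E) = μ E)
    (hErg : ∀ E : Set X, MeasurableSet E → μ (symmDiff E (T ⁻¹' E)) = 0 →
      μ E = 0 ∨ μ E = 1)
    (c : ENNReal) (hc : 0 < c)
    (F : ℕ → Set X) (hF : ∀ k, MeasurableSet (F k))
    (h : ℕ → ℕ) (hh : Tendsto h atTop atTop)
    (hdisj : ∀ k, ∀ i < h k, ∀ j < h k, i ≠ j →
      Disjoint (T^[i] '' F k) (T^[j] '' F k))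
    (htower : ∀ k, c < μ (⋃ i ∈ Finset.range (h k), T^[i] '' F k)) :
    μ (⋂ n, ⋃ k, ⋃ _ : n ≤ k, ⋃ i ∈ Finset.range (h k), T^[i] '' F k) = 1 := by
  -- basic measurability / measure-preservation facts
  have himg : ∀ (i : ℕ) (E : Set X), T^[i] '' E = (S^[i]) ⁻¹' E := fun i E =>
    congrFun (Set.image_eq_preimage_of_inverse (hST.iterate i) (hTS.iterate i)) E
  have himg_meas : ∀ (i : ℕ) (E : Set X), MeasurableSet E → MeasurableSet (T^[i] '' E) := by
    intro i E hE
    rw [himg]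
    exact (hSmeas.iterate i) hE
  have hpre : ∀ E : Set X, MeasurableSet E → μ (T ⁻¹' E) = μ E := by
    intro E hE
    have := hTpres (T ⁻¹' E) (hTmeas hE)
    rw [Set.image_preimage_eq E hTbij.2] at this
    exact this.symm
  have hTiter_meas : ∀ i : ℕ, Measurable (T^[i]) := fun i => hTmeas.iterate i
  have hpre_iter : ∀ (j : ℕ) (E : Set X), MeasurableSet E → μ ((T^[j]) ⁻¹' E) = μ E := by
    intro j
    induction j with
    | zero => intro E _; simp
    | succ n ih =>
        intro E hE
        rw [Function.iterate_succ, Set.preimage_comp, hpre _ ((hTiter_meas n) hE), ih E hE]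
  have himg_measure : ∀ (i : ℕ) (E : Set X), MeasurableSet E → μ (T^[i] '' E) = μ E := by
    intro i
    induction i with
    | zero => intro E _; simp
    | succ n ih =>
        intro E hE
        rw [Function.iterate_succ', Set.image_comp, hTpres _ (himg_meas n E hE), ih E hE]
  -- towers
  set 𝒯 : ℕ → Set X := fun k => ⋃ i ∈ Finset.range (h k), T^[i] '' F k with h𝒯def
  have h𝒯meas : ∀ k, MeasurableSet (𝒯 k) := fun k =>
    (Finset.range (h k)).measurableSet_biUnion fun i _ => himg_meas i (F k) (hF k)
  have h𝒯measure : ∀ k, μ (𝒯 k) = (h k : ENNReal) * μ (F k) := by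
    intro k
    rw [h𝒯def]
    rw [measure_biUnion_finset ?_ fun i _ => himg_meas i (F k) (hF k)]
    · simp only [himg_measure _ _ (hF k), Finset.sum_const, Finset.card_range,
        nsmul_eq_mul]
    · intro i hi j hj hij
      exact hdisj k i (Finset.mem_range.1 hi) j (Finset.mem_range.1 hj) hij
  have hFle : ∀ k, μ (F k) ≤ ((h k : ENNReal))⁻¹ := by
    intro k
    rw [ENNReal.le_inv_iff_mul_le]
    calc μ (F k) * (h k : ENNReal) = μ (𝒯 k) := by rw [h𝒯measure k, mul_comm]
      _ ≤ 1 := prob_le_one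
  -- the union sets and the target
  set U : ℕ → Set X := fun n => ⋃ k, ⋃ _ : n ≤ k, 𝒯 k with hUdef
  have hUanti : Antitone U := by
    intro a b hab
    refine Set.iUnion₂_subset fun k hk => ?_
    exact Set.subset_iUnion₂ (s := fun k _ => 𝒯 k) k (hab.trans hk)
  have hUmeas : ∀ n, MeasurableSet (U n) :=
    fun n => MeasurableSet.iUnion fun k => MeasurableSet.iUnion fun _ => h𝒯meas k
  set Λ : Set X := ⋂ n, U n with hΛdef
  have hΛmeas : MeasurableSet Λ := MeasurableSet.iInter fun n => hUmeas n
  -- the auxiliary decreasing family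
  set C : ℕ → Set X := fun p => ⋂ j ∈ Finset.range (p + 1), (T^[j]) ⁻¹' U p with hCdef
  have hCanti : Antitone C := by
    intro a b hab
    refine Set.subset_iInter₂ fun j hj => ?_
    have hj' : j ∈ Finset.range (b + 1) := by
      simp only [Finset.mem_range] at *; omega
    exact (Set.biInter_subset_of_mem hj').trans (Set.preimage_mono (hUanti hab))
  have hCmeas : ∀ p, MeasurableSet (C p) :=
    fun p => (Finset.range (p + 1)).measurableSet_biInter fun j _ =>
      (hTiter_meas j) (hUmeas p)
  -- key estimate: c ≤ μ (C p)
  have hkey : ∀ p, c ≤ μ (C p) := by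
    intro p
    have hineq : ∀ k, p ≤ k → c ≤ μ (C p) + (p : ENNReal) * μ (F k) := by
      intro k hk
      -- truncated tower is contained in C p
      have hsub : (⋃ i ∈ Finset.range (h k - p), T^[i] '' F k) ⊆ C p := by
        refine Set.iUnion₂_subset fun i hi => ?_
        rcases Finset.mem_range.1 hi with hi'
        rintro x ⟨x0, hx0, rfl⟩
        refine Set.mem_iInter₂.2 fun j hj => ?_
        have hj' : j ≤ p := by simpa [Nat.lt_succ_iff] using Finset.mem_range.1 hj
        show T^[j] (T^[i] x0) ∈ U p
        refine Set.mem_iUnion₂.2 ⟨k, hk, ?_⟩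
        refine Set.mem_iUnion₂.2 ⟨j + i, Finset.mem_range.2 (by omega), ?_⟩
        exact ⟨x0, hx0, (Function.iterate_add_apply T j i x0)⟩
      -- tower splits into truncated part and top levels
      have hsplit : 𝒯 k ⊆ (⋃ i ∈ Finset.range (h k - p), T^[i] '' F k) ∪
          ⋃ i ∈ (Finset.range (h k) \ Finset.range (h k - p)), T^[i] '' F k := by
        refine Set.iUnion₂_subset fun i hi => ?_
        rcases Finset.mem_range.1 hi with hi'
        by_cases hcase : i < h k - p
        · exact Set.subset_union_of_subset_left
            (Set.subset_iUnion₂ (s := fun i _ => T^[i] '' F k) i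
              (Finset.mem_range.2 hcase)) _
        · refine Set.subset_union_of_subset_right
            (Set.subset_iUnion₂ (s := fun i _ => T^[i] '' F k) i ?_) _
          simp only [Finset.mem_sdiff, Finset.mem_range]
          omega
      have htop : μ (⋃ i ∈ (Finset.range (h k) \ Finset.range (h k - p)), T^[i] '' F k)
          ≤ (p : ENNReal) * μ (F k) := by
        refine (measure_biUnion_finset_le _ _).trans ?_
        have hcard : (Finset.range (h k) \ Finset.range (h k - p)).card ≤ p := by
          rw [Finset.card_sdiff_of_subset (by exact Finset.range_subset_range.2 (by omega))]
          simp only [Finset.card_range]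
          omega
        calc ∑ i ∈ (Finset.range (h k) \ Finset.range (h k - p)), μ (T^[i] '' F k)
            = ∑ _i ∈ (Finset.range (h k) \ Finset.range (h k - p)), μ (F k) := by
              refine Finset.sum_congr rfl fun i _ => himg_measure i (F k) (hF k)
          _ = ((Finset.range (h k) \ Finset.range (h k - p)).card : ENNReal) * μ (F k) := by
              simp [Finset.sum_const, nsmul_eq_mul]
          _ ≤ (p : ENNReal) * μ (F k) := by
              exact mul_le_mul_left (by exact_mod_cast Nat.cast_le.2 hcard) _
      calc c ≤ μ (𝒯 k) := (htower k).le
        _ ≤ μ ((⋃ i ∈ Finset.range (h k - p), T^[i] '' F k) ∪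
            ⋃ i ∈ (Finset.range (h k) \ Finset.range (h k - p)), T^[i] '' F k) :=
          measure_mono hsplit
        _ ≤ μ (⋃ i ∈ Finset.range (h k - p), T^[i] '' F k) +
            μ (⋃ i ∈ (Finset.range (h k) \ Finset.range (h k - p)), T^[i] '' F k) :=
          measure_union_le _ _
        _ ≤ μ (C p) + (p : ENNReal) * μ (F k) :=
          add_le_add (measure_mono hsub) htop
    -- pass to the limit k → ∞
    have hzero : Tendsto (fun k => (p : ENNReal) * μ (F k)) atTop (𝓝 0) := by
      have h1 : Tendsto (fun k => ((h k : ENNReal))⁻¹) atTop (𝓝 0) :=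
        ENNReal.tendsto_inv_nat_nhds_zero.comp hh
      have h2 : Tendsto (fun k => (p : ENNReal) * ((h k : ENNReal))⁻¹) atTop (𝓝 0) := by
        simpa using ENNReal.Tendsto.const_mul h1 (Or.inr (by simp))
      refine tendsto_of_tendsto_of_tendsto_of_le_of_le tendsto_const_nhds h2
        (fun k => zero_le) (fun k => mul_le_mul_right (hFle k) _)
    have htend : Tendsto (fun k => μ (C p) + (p : ENNReal) * μ (F k)) atTop (𝓝 (μ (C p))) := by
      simpa using (tendsto_const_nhds (x := μ (C p)) (f := atTop (α := ℕ))).add hzero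
    exact ge_of_tendsto htend (eventually_atTop.2 ⟨p, hineq⟩)
  -- the invariant core
  set K : Set X := ⋂ j : ℕ, (T^[j]) ⁻¹' Λ with hKdef
  have hKmeas : MeasurableSet K :=
    MeasurableSet.iInter fun j => (hTiter_meas j) hΛmeas
  have hKeqC : K = ⋂ p, C p := by
    apply Set.Subset.antisymm
    · refine Set.subset_iInter fun p => Set.subset_iInter₂ fun j hj => ?_
      refine (Set.iInter_subset _ j).trans (Set.preimage_mono ?_)
      exact Set.iInter_subset _ p
    · refine Set.subset_iInter fun j => ?_
      intro x hx
      simp only [Set.mem_preimage, hΛdef, Set.mem_iInter]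
      intro n
      have hx' := Set.mem_iInter.1 hx (max j n)
      have := Set.mem_iInter₂.1 hx' j (Finset.mem_range.2 (by omega))
      exact hUanti (le_max_right j n) this
  have hKge : c ≤ μ K := by
    rw [hKeqC, hCanti.measure_iInter (fun p => (hCmeas p).nullMeasurableSet)
      ⟨0, (lt_of_le_of_lt prob_le_one ENNReal.one_lt_top).ne⟩]
    exact le_iInf hkey
  have hKsub : K ⊆ T ⁻¹' K := by
    intro x hx
    simp only [hKdef, Set.mem_iInter, Set.mem_preimage] at hx ⊢
    intro j
    have := hx (j + 1)
    rwa [Function.iterate_succ_apply] at this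
  have hsymm : μ (symmDiff K (T ⁻¹' K)) = 0 := by
    have hdiff : symmDiff K (T ⁻¹' K) = (T ⁻¹' K) \ K := by
      rw [Set.symmDiff_def]
      rw [Set.diff_eq_empty.2 hKsub]
      simp
    rw [hdiff, measure_diff hKsub hKmeas.nullMeasurableSet
      (lt_of_le_of_lt prob_le_one ENNReal.one_lt_top).ne, hpre K hKmeas, tsub_self]
  have hK1 : μ K = 1 := by
    rcases hErg K hKmeas hsymm with h0 | h1
    · exact absurd (h0 ▸ hKge) (by simpa using hc.ne')
    · exact h1
  have hKΛ : K ⊆ Λ := by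
    intro x hx
    have := Set.mem_iInter.1 hx 0
    simpa using this
  have : (1 : ENNReal) ≤ μ Λ := hK1 ▸ measure_mono hKΛ
  exact le_antisymm prob_le_one this
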